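/- For the harmonic degree-five polynomial surface r(u,v) with coefficient vectors a,b,c,d,e,f,g,h,i,j,k ∈ ℝ³ (as in the standard form), the conditions |r_u|² = |r_v|² and ⟨r_u, r_v⟩ = 0 for all (u,v) ∈ ℝ² imply ⟨a,a⟩ = ⟨b,b⟩ and ⟨a,b⟩ = 0. -/

import Mathlib

/-- The general harmonic degree-five polynomial surface with coefficient
vectors a,…,k ∈ ℝ³. -/
noncomputable def quinticSurface (a b c d e f g h i j k : ℝ × ℝ × ℝ)
    (u v : ℝ) : ℝ × ℝ × ℝ :=
  (u ^ 5 - 10 * u ^ 3 * v ^ 2 + 5 * u * v ^ 4) • a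
    + (v ^ 5 - 10 * u ^ 2 * v ^ 3 + 5 * u ^ 4 * v) • b
    + (u ^ 4 - 6 * u ^ 2 * v ^ 2 + v ^ 4) • c
    + (u * v * (u ^ 2 - v ^ 2)) • d
    + (u * (u ^ 2 - 3 * v ^ 2)) • e
    + (v * (v ^ 2 - 3 * u ^ 2)) • f
    + (u ^ 2 - v ^ 2) • g + (u * v) • h + u • i + v • j + k

/-- Euclidean dot product on ℝ³ (as ℝ × ℝ × ℝ). -/
def dot3 (p q : ℝ × ℝ × ℝ) : ℝ := p.1 * q.1 + p.2.1 * q.2.1 + p.2.2 * q.2.2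

lemma hasDerivAt_qu (a b c d e f g h i j k : ℝ × ℝ × ℝ) (u v : ℝ) :
    HasDerivAt (fun t => quinticSurface a b c d e f g h i j k t v)
      ((5*u^4 - 30*u^2*v^2 + 5*v^4) • a + (20*u^3*v - 20*u*v^3) • b
        + (4*u^3 - 12*u*v^2) • c + (3*u^2*v - v^3) • d + (3*u^2 - 3*v^2) • e
        + (-(6*u*v)) • f + (2*u) • g + v • h + i) u := by
  unfold quinticSurface
  have h1 := ((hasDerivAt_pow 5 u).sub (((hasDerivAt_pow 3 u).const_mul 10).mul_const (v^2))).add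
    (((hasDerivAt_id u).const_mul 5).mul_const (v^4))
  have h2 := ((hasDerivAt_const u (v^5)).sub
      (((hasDerivAt_pow 2 u).const_mul 10).mul_const (v^3))).add
    (((hasDerivAt_pow 4 u).const_mul 5).mul_const v)
  have h3 := ((hasDerivAt_pow 4 u).sub
      (((hasDerivAt_pow 2 u).const_mul 6).mul_const (v^2))).add (hasDerivAt_const u (v^4))
  have h4 := ((hasDerivAt_id u).mul_const v).mul
    ((hasDerivAt_pow 2 u).sub (hasDerivAt_const u (v^2)))
  have h5 := (hasDerivAt_id u).mul ((hasDerivAt_pow 2 u).sub (hasDerivAt_const u (3*v^2)))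
  have h6 := ((hasDerivAt_const u (v^2)).sub ((hasDerivAt_pow 2 u).const_mul 3)).const_mul v
  have h7 := (hasDerivAt_pow 2 u).sub (hasDerivAt_const u (v^2))
  have h8 := (hasDerivAt_id u).mul_const v
  have H := ((((((((((h1.smul_const a).add (h2.smul_const b)).add (h3.smul_const c)).add
    (h4.smul_const d)).add (h5.smul_const e)).add (h6.smul_const f)).add
    (h7.smul_const g)).add (h8.smul_const h)).add ((hasDerivAt_id u).smul_const i)).add
    (hasDerivAt_const u (v • j))).add (hasDerivAt_const u k)
  simp only [id_eq] at H
  refine H.congr_deriv ?_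
  ext <;> simp <;> ring

lemma hasDerivAt_qv (a b c d e f g h i j k : ℝ × ℝ × ℝ) (u v : ℝ) :
    HasDerivAt (fun t => quinticSurface a b c d e f g h i j k u t)
      ((20*u*v^3 - 20*u^3*v) • a + (5*v^4 - 30*u^2*v^2 + 5*u^4) • b
        + (4*v^3 - 12*u^2*v) • c + (u^3 - 3*u*v^2) • d + (-(6*u*v)) • e
        + (3*v^2 - 3*u^2) • f + (-(2*v)) • g + u • h + j) v := by
  unfold quinticSurface
  have h1 := ((hasDerivAt_const v (u^5)).sub
      ((hasDerivAt_pow 2 v).const_mul (10*u^3))).add ((hasDerivAt_pow 4 v).const_mul (5*u))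
  have h2 := ((hasDerivAt_pow 5 v).sub ((hasDerivAt_pow 3 v).const_mul (10*u^2))).add
    ((hasDerivAt_id v).const_mul (5*u^4))
  have h3 := ((hasDerivAt_const v (u^4)).sub
      ((hasDerivAt_pow 2 v).const_mul (6*u^2))).add (hasDerivAt_pow 4 v)
  have h4 := ((hasDerivAt_id v).const_mul u).mul
    ((hasDerivAt_const v (u^2)).sub (hasDerivAt_pow 2 v))
  have h5 := ((hasDerivAt_const v (u^2)).sub ((hasDerivAt_pow 2 v).const_mul 3)).const_mul u
  have h6 := (hasDerivAt_id v).mul ((hasDerivAt_pow 2 v).sub (hasDerivAt_const v (3*u^2)))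
  have h7 := (hasDerivAt_const v (u^2)).sub (hasDerivAt_pow 2 v)
  have h8 := (hasDerivAt_id v).const_mul u
  have H := ((((((((((h1.smul_const a).add (h2.smul_const b)).add (h3.smul_const c)).add
    (h4.smul_const d)).add (h5.smul_const e)).add (h6.smul_const f)).add
    (h7.smul_const g)).add (h8.smul_const h)).add (hasDerivAt_const v (u • i))).add
    ((hasDerivAt_id v).smul_const j)).add (hasDerivAt_const v k)
  simp only [id_eq] at H
  refine H.congr_deriv ?_
  ext <;> simp <;> ring

/-- if the harmonic degree-five polynomial surface is in
isothermal parameters (E = G, F = 0 everywhere), then ⟨a,a⟩ = ⟨b,b⟩ and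
⟨a,b⟩ = 0. -/
theorem quintic_isothermal_top_coefficients
    (a b c d e f g h i j k : ℝ × ℝ × ℝ)
    (hEG : ∀ u v : ℝ,
      dot3 (deriv (fun t => quinticSurface a b c d e f g h i j k t v) u)
           (deriv (fun t => quinticSurface a b c d e f g h i j k t v) u)
      = dot3 (deriv (fun t => quinticSurface a b c d e f g h i j k u t) v)
             (deriv (fun t => quinticSurface a b c d e f g h i j k u t) v))
    (hF : ∀ u v : ℝ,
      dot3 (deriv (fun t => quinticSurface a b c d e f g h i j k t v) u)
           (deriv (fun t => quinticSurface a b c d e f g h i j k u t) v) = 0) :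
    dot3 a a = dot3 b b ∧ dot3 a b = 0 := by
  have hqu : ∀ u v : ℝ, deriv (fun t => quinticSurface a b c d e f g h i j k t v) u
      = (5*u^4 - 30*u^2*v^2 + 5*v^4) • a + (20*u^3*v - 20*u*v^3) • b
        + (4*u^3 - 12*u*v^2) • c + (3*u^2*v - v^3) • d + (3*u^2 - 3*v^2) • e
        + (-(6*u*v)) • f + (2*u) • g + v • h + i :=
    fun u v => (hasDerivAt_qu a b c d e f g h i j k u v).deriv
  have hqv : ∀ u v : ℝ, deriv (fun t => quinticSurface a b c d e f g h i j k u t) v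
      = (20*u*v^3 - 20*u^3*v) • a + (5*v^4 - 30*u^2*v^2 + 5*u^4) • b
        + (4*v^3 - 12*u^2*v) • c + (u^3 - 3*u*v^2) • d + (-(6*u*v)) • e
        + (3*v^2 - 3*u^2) • f + (-(2*v)) • g + u • h + j :=
    fun u v => (hasDerivAt_qv a b c d e f g h i j k u v).deriv
  simp only [hqu, hqv, dot3, Prod.fst_add, Prod.snd_add, Prod.smul_fst, Prod.smul_snd,
    smul_eq_mul] at hEG hF
  constructor
  · simp only [dot3]
    linear_combination (1/1008000) * hEG 0 0 - (8/1008000) * hEG 1 0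
      + (28/1008000) * hEG 2 0 - (56/1008000) * hEG 3 0 + (70/1008000) * hEG 4 0
      - (56/1008000) * hEG 5 0 + (28/1008000) * hEG 6 0 - (8/1008000) * hEG 7 0
      + (1/1008000) * hEG 8 0
  · simp only [dot3]
    linear_combination (1/1008000) * hF 0 0 - (8/1008000) * hF 1 0
      + (28/1008000) * hF 2 0 - (56/1008000) * hF 3 0 + (70/1008000) * hF 4 0
      - (56/1008000) * hF 5 0 + (28/1008000) * hF 6 0 - (8/1008000) * hF 7 0
      + (1/1008000) * hF 8 0
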